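/- Uniqueness criterion at 1. Let 0 ≤ α < 1 < β, k := ⌈α+β⌉, A := {0,…,k−1}, γ := α+β−k+1 (then γ ∈ (0,1]). The string v^{α,β} always satisfies φ̄_∞^{α,β}(v^{α,β}) = 1 and φ̄_∞^{α,β}(σv^{α,β}) = γ, and the following are equivalent: (1) the pair of equations φ̄_∞^{α,β}(v) = 1 and φ̄_∞^{α,β}(σv) = γ has exactly one solution v ∈ A^ℕ; (2) either Ť_{α,β}(1) = 1 (i.e. 1 is a fixed point), or Ťⁿ_{α,β}(1) ≠ 1 for all n ≥ 1; (3) v^{α,β} is not periodic (σᵖv^{α,β} ≠ v^{α,β} for all p ≥ 1) or v^{α,β} is the constant string (k−1)^∞. -/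

import Mathlib

open Filter Set

/-- The shift map on one-sided sequences. -/
def shft (x : ℕ → ℕ) : ℕ → ℕ := fun n => x (n + 1)

/-- Strict lexicographic order on one-sided sequences:
`x ≺ y` iff they differ and `x m < y m` at the first index `m` where they differ. -/
def lexLt (x y : ℕ → ℕ) : Prop := ∃ m, (∀ i, i < m → x i = y i) ∧ x m < y m

/-- Lexicographic order `x ≼ y` on one-sided sequences. -/
def lexLe (x y : ℕ → ℕ) : Prop := x = y ∨ lexLt x y

/-- The map `φ̄^{α,β} : ℝ → [0,1]`:  `0` for `t ≤ α`, `(t-α)/β` for `α ≤ t ≤ α+β`,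
`1` for `t ≥ α+β`. -/
noncomputable def phiB (α β t : ℝ) : ℝ :=
  if t ≤ α then 0 else if α + β ≤ t then 1 else (t - α) / β

/-- `φ̄ₙ^{α,β}(x) = φ̄^{α,β}(x₀ + φ̄^{α,β}(x₁ + ⋯ + φ̄^{α,β}(x_{n-1})⋯))`. -/
noncomputable def phiBN (α β : ℝ) : ℕ → (ℕ → ℕ) → ℝ
  | 0, _ => 0
  | n + 1, x => phiB α β (x 0 + phiBN α β n (shft x))

/-- `φ̄_∞^{α,β}(x) = limₙ φ̄ₙ^{α,β}(x)`; the sequence `φ̄ₙ^{α,β}(x)` is nondecreasing in `n`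
and bounded, so its limit is its supremum. -/
noncomputable def phiBInf (α β : ℝ) (x : ℕ → ℕ) : ℝ := ⨆ n, phiBN α β n x

/-- `T̂_{α,β}(x) = βx + α − ⌊βx + α⌋`. -/
noncomputable def Tlow (α β x : ℝ) : ℝ := β * x + α - ⌊β * x + α⌋

/-- `Ť_{α,β}(x) = βx + α + 1 − ⌈βx + α⌉`. -/
noncomputable def Thigh (α β x : ℝ) : ℝ := β * x + α + 1 - ⌈β * x + α⌉

/-- `k = ⌈α + β⌉`, the size of the alphabet `A = {0, …, k-1}`. -/
noncomputable def kAB (α β : ℝ) : ℕ := (⌈α + β⌉).toNat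

/-- The string `u^{α,β}`, the coding of the orbit of `0`:
`u^{α,β}ₙ = ⌊β T̂ⁿ_{α,β}(0) + α⌋`. -/
noncomputable def uItin (α β : ℝ) : ℕ → ℕ := fun n => (⌊β * (Tlow α β)^[n] 0 + α⌋).toNat

/-- The string `v^{α,β}`, the coding of the orbit of `1`:
`v^{α,β}ₙ = ⌈β Ťⁿ_{α,β}(1) + α⌉ − 1`. -/
noncomputable def vItin (α β : ℝ) : ℕ → ℕ := fun n => (⌈β * (Thigh α β)^[n] 1 + α⌉ - 1).toNat

/-- The shift space `Σ(u,v) = {x ∈ A^ℕ : u ≼ σⁿx ≼ v for all n ≥ 0}`, `A = {0,…,k-1}`. -/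
def SigSet (k : ℕ) (u v : ℕ → ℕ) : Set (ℕ → ℕ) :=
  {x | (∀ i, x i < k) ∧ ∀ n, lexLe u (shft^[n] x) ∧ lexLe (shft^[n] x) v}

/-- The number of words of length `n` in the language of `Σ(u,v)` (prefixes of elements). -/
noncomputable def nWords (k : ℕ) (u v : ℕ → ℕ) (n : ℕ) : ℕ :=
  Nat.card {w : Fin n → ℕ // ∃ x ∈ SigSet k u v, ∀ i : Fin n, x i.1 = w i}

/-- The topological entropy (base 2) of `Σ(u,v)`:
`h = limₙ (1/n) log₂ card(Lₙ)` (the limit exists by subadditivity, so it equals the limsup;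
it is `0` when `Σ(u,v) = ∅`). -/
noncomputable def entS (k : ℕ) (u v : ℕ → ℕ) : ℝ :=
  Filter.limsup (fun n : ℕ => Real.logb 2 (nWords k u v n) / (n : ℝ)) Filter.atTop

/-- Concatenation of the word `w₀ ⋯ w_{p-1}` (the first `p` letters of `w`) with the
string `y`. -/
def wcat (p : ℕ) (w y : ℕ → ℕ) : ℕ → ℕ := fun n => if n < p then w n else y (n - p)


section Aux
variable {α β : ℝ}

lemma clamp_lip {u w : ℝ} (h : w ≤ u) :
    max 0 (min 1 u) ≤ max 0 (min 1 w) + (u - w) := by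
  rcases le_total u 1 with h1 | h1 <;> rcases le_total w 1 with h2 | h2 <;>
    rcases le_total u 0 with h3 | h3 <;> rcases le_total w 0 with h4 | h4 <;>
    simp [max_def, min_def] <;> split_ifs <;> linarith

theorem phiB_clamp (hβ : 0 < β) (t : ℝ) :
    phiB α β t = max 0 (min 1 ((t - α) / β)) := by
  unfold phiB
  split_ifs with h1 h2
  · rw [max_eq_left]
    exact (min_le_right _ _).trans (div_nonpos_of_nonpos_of_nonneg (by linarith) hβ.le)
  · rw [min_eq_left (by rw [le_div_iff₀ hβ]; linarith), max_eq_right zero_le_one]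
  · push_neg at h1
    rw [min_eq_right (by rw [div_le_one hβ]; linarith),
      max_eq_right (div_nonneg (by linarith) hβ.le)]

theorem phiB_mono (hβ : 0 < β) : Monotone (phiB α β) := by
  intro a b h
  rw [phiB_clamp hβ, phiB_clamp hβ]
  gcongr

theorem phiB_nonneg (hβ : 0 < β) (t : ℝ) : 0 ≤ phiB α β t := by
  rw [phiB_clamp hβ]; exact le_max_left _ _

theorem phiB_le_one (hβ : 0 < β) (t : ℝ) : phiB α β t ≤ 1 := by
  rw [phiB_clamp hβ]; exact max_le zero_le_one (min_le_left _ _)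

theorem phiB_lip (hβ : 0 < β) {x y : ℝ} (h : y ≤ x) :
    phiB α β x ≤ phiB α β y + (x - y) / β := by
  rw [phiB_clamp hβ, phiB_clamp hβ]
  have := clamp_lip (u := (x - α)/β) (w := (y - α)/β) (by gcongr)
  have e : (x - α)/β - (y - α)/β = (x - y)/β := by ring
  linarith [this, e.le]

theorem phiB_fixed (hβ : 0 < β) {s : ℝ} (h0 : 0 ≤ s) (h1 : s ≤ 1) :
    phiB α β (β * s + α) = s := by
  rw [phiB_clamp hβ]
  have : (β * s + α - α) / β = s := by field_simp; ring
  rw [this, min_eq_right h1, max_eq_right h0]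

theorem phiB_eq_one (hβ : 0 < β) {t : ℝ} (h : phiB α β t = 1) : α + β ≤ t := by
  rw [phiB_clamp hβ] at h
  have h2 : min 1 ((t - α)/β) = 1 := by
    rcases max_cases (0:ℝ) (min 1 ((t - α)/β)) with ⟨e, he⟩ | ⟨e, he⟩ <;> linarith
  have h3 : (1:ℝ) ≤ (t - α)/β := by
    rcases min_cases (1:ℝ) ((t - α)/β) with ⟨e, he⟩ | ⟨e, he⟩ <;> linarith
  rw [le_div_iff₀ hβ] at h3; linarith

theorem phiB_mem_Ioo (hβ : 0 < β) {t c : ℝ} (h : phiB α β t = c)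
    (h0 : 0 < c) (h1 : c < 1) : t = β * c + α := by
  rw [phiB_clamp hβ] at h
  have h2 : min 1 ((t - α)/β) = c := by
    rcases max_cases (0:ℝ) (min 1 ((t - α)/β)) with ⟨e, he⟩ | ⟨e, he⟩ <;> linarith
  have h3 : (t - α)/β = c := by
    rcases min_cases (1:ℝ) ((t - α)/β) with ⟨e, he⟩ | ⟨e, he⟩ <;> linarith
  rw [div_eq_iff hβ.ne'] at h3; linarith

theorem phiB_continuous (hβ : 0 < β) : Continuous (phiB α β) := by
  have : phiB α β = fun t => max 0 (min 1 ((t - α) / β)) := funext (phiB_clamp hβ)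
  rw [this]; fun_prop


theorem phiBN_nonneg (hβ : 0 < β) (n : ℕ) (x : ℕ → ℕ) : 0 ≤ phiBN α β n x := by
  cases n with
  | zero => exact le_refl 0
  | succ n => exact phiB_nonneg hβ _

theorem phiBN_le_one (hβ : 0 < β) (n : ℕ) (x : ℕ → ℕ) : phiBN α β n x ≤ 1 := by
  cases n with
  | zero => exact zero_le_one
  | succ n => exact phiB_le_one hβ _

theorem phiBN_mono (hβ : 0 < β) (x : ℕ → ℕ) :
    Monotone (fun n => phiBN α β n x) := by
  have key : ∀ n (x : ℕ → ℕ), phiBN α β n x ≤ phiBN α β (n+1) x := by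
    intro n
    induction n with
    | zero => intro x; exact phiB_nonneg hβ _
    | succ n ih =>
      intro x
      exact phiB_mono hβ (by have := ih (shft x); push_cast; linarith)
  exact monotone_nat_of_le_succ (fun n => key n x)

theorem phiBInf_le_one (hβ : 0 < β) (x : ℕ → ℕ) : phiBInf α β x ≤ 1 :=
  ciSup_le (fun n => phiBN_le_one hβ n x)

theorem phiBInf_nonneg (hβ : 0 < β) (x : ℕ → ℕ) : 0 ≤ phiBInf α β x :=
  le_ciSup_of_le ⟨1, fun _ ⟨n, hn⟩ => hn ▸ phiBN_le_one hβ n x⟩ 0 (le_refl 0)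

theorem phiBN_tendsto (hβ : 0 < β) (x : ℕ → ℕ) :
    Tendsto (fun n => phiBN α β n x) atTop (nhds (phiBInf α β x)) :=
  tendsto_atTop_ciSup (phiBN_mono hβ x)
    ⟨1, fun _ ⟨n, hn⟩ => hn ▸ phiBN_le_one hβ n x⟩

theorem phiBInf_rec (hβ : 0 < β) (x : ℕ → ℕ) :
    phiBInf α β x = phiB α β (x 0 + phiBInf α β (shft x)) := by
  have h1 : Tendsto (fun n => phiBN α β (n+1) x) atTop (nhds (phiBInf α β x)) :=
    (phiBN_tendsto hβ x).comp (tendsto_add_atTop_nat 1)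
  have hadd : Tendsto (fun n => ((x 0 : ℝ) + phiBN α β n (shft x))) atTop
      (nhds ((x 0 : ℝ) + phiBInf α β (shft x))) :=
    tendsto_const_nhds.add (phiBN_tendsto hβ (shft x))
  have h2 : Tendsto (fun n => phiBN α β (n+1) x) atTop
      (nhds (phiB α β (x 0 + phiBInf α β (shft x)))) :=
    ((phiB_continuous (α := α) (β := β) hβ).tendsto _).comp hadd
  exact tendsto_nhds_unique h1 h2

theorem phiBN_zero_str (hα0 : 0 ≤ α) (n : ℕ) : phiBN α β n (fun _ => 0) = 0 := by
  induction n with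
  | zero => rfl
  | succ n ih =>
    show phiB α β _ = 0
    have : shft (fun _ => 0) = (fun _ => (0:ℕ)) := rfl
    rw [this, ih]
    unfold phiB
    rw [if_pos (by norm_num; exact hα0)]

theorem phiBInf_zero_str (hα0 : 0 ≤ α) : phiBInf α β (fun _ => 0) = 0 := by
  unfold phiBInf
  simp [phiBN_zero_str hα0]

theorem shft_iter (p : ℕ) (x : ℕ → ℕ) (j : ℕ) : shft^[p] x j = x (p + j) := by
  induction p generalizing x with
  | zero => simp
  | succ p ih =>
    rw [Function.iterate_succ_apply, ih (shft x)]
    show x (p + j + 1) = _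
    congr 1; omega

theorem Thigh_pos (y : ℝ) : 0 < Thigh α β y := by
  have := Int.ceil_lt_add_one (β * y + α)
  unfold Thigh; linarith

theorem Thigh_le_one (y : ℝ) : Thigh α β y ≤ 1 := by
  have := Int.le_ceil (β * y + α)
  unfold Thigh; linarith

theorem t_pos (n : ℕ) : 0 < (Thigh α β)^[n] 1 := by
  cases n with
  | zero => exact one_pos
  | succ n => rw [Function.iterate_succ_apply']; exact Thigh_pos _

theorem t_le_one (n : ℕ) : (Thigh α β)^[n] 1 ≤ 1 := by
  cases n with
  | zero => exact le_refl 1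
  | succ n => rw [Function.iterate_succ_apply']; exact Thigh_le_one _

theorem ceil_t_pos (hα0 : 0 ≤ α) (hβ : 0 < β) (n : ℕ) :
    1 ≤ ⌈β * (Thigh α β)^[n] 1 + α⌉ :=
  Int.ceil_pos.2 (by have := t_pos (α := α) (β := β) n; positivity)

theorem v_cast (hα0 : 0 ≤ α) (hβ : 0 < β) (n : ℕ) :
    (vItin α β n : ℝ) = (⌈β * (Thigh α β)^[n] 1 + α⌉ : ℤ) - 1 := by
  unfold vItin
  have h := ceil_t_pos (α := α) hα0 hβ n
  rw [← Int.cast_natCast, Int.toNat_of_nonneg (by omega)]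
  push_cast; ring

theorem v_add_t (hα0 : 0 ≤ α) (hβ : 0 < β) (n : ℕ) :
    (vItin α β n : ℝ) + (Thigh α β)^[n+1] 1 = β * (Thigh α β)^[n] 1 + α := by
  rw [v_cast hα0 hβ n, Function.iterate_succ_apply']
  unfold Thigh; ring

theorem kAB_two (hα0 : 0 ≤ α) (hβ : 1 < β) : 2 ≤ ⌈α + β⌉ := by
  have : ((1:ℤ):ℝ) < α + β := by push_cast; linarith
  have := Int.lt_ceil.mpr this
  omega

theorem kAB_cast (hα0 : 0 ≤ α) (hβ : 1 < β) : (kAB α β : ℝ) = (⌈α + β⌉ : ℤ) := by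
  unfold kAB
  rw [← Int.cast_natCast, Int.toNat_of_nonneg (by have := kAB_two hα0 hβ; omega)]

theorem ceil_t_le (hβ : 1 < β) (n : ℕ) :
    ⌈β * (Thigh α β)^[n] 1 + α⌉ ≤ ⌈α + β⌉ := by
  apply Int.ceil_le_ceil
  have h1 := t_le_one (α := α) (β := β) n
  nlinarith

theorem v_lt_k (hα0 : 0 ≤ α) (hβ : 1 < β) (n : ℕ) : vItin α β n < kAB α β := by
  have h1 := ceil_t_le (α := α) hβ n
  have h2 := kAB_two hα0 hβ
  unfold vItin kAB
  omega

theorem phiBN_bdd (hβ : 0 < β) (x : ℕ → ℕ) :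
    BddAbove (Set.range fun n => phiBN α β n x) :=
  ⟨1, fun _ ⟨n, hn⟩ => hn ▸ phiBN_le_one hβ n x⟩

theorem phiBN_v_bounds (hα0 : 0 ≤ α) (hβ : 1 < β) (n : ℕ) : ∀ m,
    phiBN α β n (fun j => vItin α β (m + j)) ≤ (Thigh α β)^[m] 1 ∧
    (Thigh α β)^[m] 1 - (β⁻¹)^n ≤ phiBN α β n (fun j => vItin α β (m + j)) := by
  have hb0 : (0:ℝ) < β := by linarith
  induction n with
  | zero =>
    intro m
    constructor
    · exact (t_pos m).le
    · have := t_le_one (α := α) (β := β) m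
      show _ - (β⁻¹)^0 ≤ (0:ℝ)
      simp; linarith
  | succ n ih =>
    intro m
    obtain ⟨ihu, ihl⟩ := ih (m+1)
    have hsh : shft (fun j => vItin α β (m + j)) = fun j => vItin α β ((m+1) + j) := by
      funext j; show vItin α β (m + (j+1)) = _; congr 1; omega
    have e : phiBN α β (n+1) (fun j => vItin α β (m + j))
        = phiB α β ((vItin α β m : ℝ) + phiBN α β n (fun j => vItin α β ((m+1) + j))) := by
      show phiB α β _ = _
      rw [hsh]
      rfl
    have hvt := v_add_t hα0 hb0 m
    have ht0 := t_pos (α := α) (β := β) (m+1)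
    have hfix : phiB α β ((vItin α β m : ℝ) + (Thigh α β)^[m+1] 1) = (Thigh α β)^[m] 1 := by
      rw [hvt]
      exact phiB_fixed hb0 (t_pos m).le (t_le_one m)
    constructor
    · rw [e]
      calc phiB α β ((vItin α β m : ℝ) + phiBN α β n (fun j => vItin α β ((m+1) + j)))
          ≤ phiB α β ((vItin α β m : ℝ) + (Thigh α β)^[m+1] 1) :=
            phiB_mono hb0 (by linarith)
        _ = (Thigh α β)^[m] 1 := hfix
    · rw [e]
      have hlip := phiB_lip (α := α) hb0
        (x := (vItin α β m : ℝ) + (Thigh α β)^[m+1] 1)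
        (y := (vItin α β m : ℝ) + phiBN α β n (fun j => vItin α β ((m+1) + j)))
        (by linarith)
      rw [hfix] at hlip
      set s := phiBN α β n (fun j => vItin α β ((m+1) + j)) with hs
      have e2 : ((vItin α β m : ℝ) + (Thigh α β)^[m+1] 1 - ((vItin α β m : ℝ) + s)) / β
          = ((Thigh α β)^[m+1] 1 - s) / β := by ring
      have h2 : ((Thigh α β)^[m+1] 1 - s) / β ≤ (β⁻¹)^n / β := by gcongr ?_ / β; linarith
      have h3 : (β⁻¹)^n / β = (β⁻¹)^(n+1) := by rw [pow_succ, div_eq_mul_inv]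
      linarith [hlip, e2.le, e2.ge]

theorem phiBInf_shifted_v (hα0 : 0 ≤ α) (hβ : 1 < β) (m : ℕ) :
    phiBInf α β (fun j => vItin α β (m + j)) = (Thigh α β)^[m] 1 := by
  have hb0 : (0:ℝ) < β := by linarith
  apply le_antisymm
  · exact ciSup_le fun n => (phiBN_v_bounds hα0 hβ n m).1
  · have hpow : Tendsto (fun n : ℕ => (β⁻¹)^n) atTop (nhds 0) :=
      tendsto_pow_atTop_nhds_zero_of_lt_one (by positivity) (inv_lt_one_of_one_lt₀ hβ)
    have hlim : Tendsto (fun n : ℕ => (Thigh α β)^[m] 1 - (β⁻¹)^n) atTop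
        (nhds ((Thigh α β)^[m] 1)) := by
      simpa using tendsto_const_nhds.sub hpow
    apply le_of_tendsto hlim
    filter_upwards with n
    exact (phiBN_v_bounds hα0 hβ n m).2.trans
      (le_ciSup (phiBN_bdd hb0 _) n)

theorem phiBInf_iter_shft_v (hα0 : 0 ≤ α) (hβ : 1 < β) (p : ℕ) :
    phiBInf α β (shft^[p] (vItin α β)) = (Thigh α β)^[p] 1 := by
  have : shft^[p] (vItin α β) = fun j => vItin α β (p + j) := by
    funext j; exact shft_iter p _ j
  rw [this, phiBInf_shifted_v hα0 hβ p]

theorem phiBInf_v_eq_one (hα0 : 0 ≤ α) (hβ : 1 < β) :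
    phiBInf α β (vItin α β) = 1 := by
  have h := phiBInf_shifted_v hα0 hβ 0
  have e : (fun j => vItin α β (0 + j)) = vItin α β := by
    funext j; rw [Nat.zero_add]
  rw [e] at h
  rw [h]; rfl

theorem phiBInf_shft_v (hα0 : 0 ≤ α) (hβ : 1 < β) :
    phiBInf α β (shft (vItin α β)) = Thigh α β 1 := by
  have h := phiBInf_shifted_v hα0 hβ 1
  have e : (fun j => vItin α β (1 + j)) = shft (vItin α β) := by
    funext j; show vItin α β (1 + j) = vItin α β (j + 1); congr 1; omega
  rw [e] at h
  rw [h, Function.iterate_one]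

theorem Thigh_one_eq (hα0 : 0 ≤ α) (hβ : 1 < β) :
    Thigh α β 1 = α + β - kAB α β + 1 := by
  unfold Thigh
  rw [kAB_cast hα0 hβ, show β * (1:ℝ) + α = α + β by ring]
  ring

theorem kAB_pos (hα0 : 0 ≤ α) (hβ : 1 < β) : 2 ≤ kAB α β := by
  have := kAB_two (α := α) hα0 hβ
  unfold kAB; omega

theorem t_all_one (h1 : Thigh α β 1 = 1) (n : ℕ) : (Thigh α β)^[n] 1 = 1 := by
  induction n with
  | zero => rfl
  | succ n ih => rw [Function.iterate_succ_apply', ih, h1]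

theorem v_zero (hα0 : 0 ≤ α) (hβ : 1 < β) : vItin α β 0 = kAB α β - 1 := by
  unfold vItin kAB
  rw [Function.iterate_zero_apply, show β * (1:ℝ) + α = α + β by ring]
  omega

theorem v_const (hα0 : 0 ≤ α) (hβ : 1 < β) (h1 : Thigh α β 1 = 1) :
    vItin α β = fun _ => kAB α β - 1 := by
  funext n
  unfold vItin kAB
  rw [t_all_one h1 n, show β * (1:ℝ) + α = α + β by ring]
  omega

theorem alphabeta_int (hα0 : 0 ≤ α) (hβ : 1 < β) (h1 : Thigh α β 1 = 1) :
    α + β = ((⌈α + β⌉ : ℤ) : ℝ) := by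
  unfold Thigh at h1
  rw [show β * (1:ℝ) + α = α + β by ring] at h1
  linarith

theorem forceA (hα0 : 0 ≤ α) (hβ : 1 < β) (h1 : Thigh α β 1 = 1) (x : ℕ → ℕ)
    (hx : ∀ i, x i < kAB α β) (hs : phiBInf α β x = 1) : x = vItin α β := by
  have hb0 : (0:ℝ) < β := by linarith
  have hK := alphabeta_int hα0 hβ h1
  have hKc := kAB_cast (α := α) (β := β) hα0 hβ
  have claim : ∀ m, phiBInf α β (shft^[m] x) = 1 := by
    intro m
    induction m with
    | zero => rw [Function.iterate_zero_apply]; exact hs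
    | succ m ih =>
      have hrec := phiBInf_rec (α := α) hb0 (shft^[m] x)
      rw [ih, show shft (shft^[m] x) = shft^[m+1] x from (Function.iterate_succ_apply' shft m x).symm] at hrec
      have hle := phiB_eq_one hb0 hrec.symm
      have hx0 : ((shft^[m] x) 0 : ℝ) ≤ (kAB α β : ℝ) - 1 := by
        have h' := hx (m + 0)
        rw [shft_iter]
        have : x (m + 0) + 1 ≤ kAB α β := h'
        have := (Nat.cast_le (α := ℝ)).2 this
        push_cast at this ⊢
        linarith
      have hub := phiBInf_le_one (α := α) hb0 (shft^[m+1] x)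
      have hlb := phiBInf_nonneg (α := α) hb0 (shft^[m+1] x)
      have : (1:ℝ) ≤ phiBInf α β (shft^[m+1] x) := by
        rw [hK, ← hKc] at hle
        linarith
      linarith
  have hxm : ∀ m, x m = kAB α β - 1 := by
    intro m
    have hrec := phiBInf_rec (α := α) hb0 (shft^[m] x)
    rw [claim m, show shft (shft^[m] x) = shft^[m+1] x from (Function.iterate_succ_apply' shft m x).symm] at hrec
    have hle := phiB_eq_one hb0 hrec.symm
    rw [shft_iter] at hle
    have hub := phiBInf_le_one (α := α) hb0 (shft^[m+1] x)
    have hge : (kAB α β : ℝ) - 1 ≤ (x (m + 0) : ℝ) := by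
      rw [hK, ← hKc] at hle
      linarith
    have hlt := hx (m + 0)
    have h2 := kAB_pos (α := α) (β := β) hα0 hβ
    have : kAB α β - 1 ≤ x (m + 0) := by
      by_contra hcon
      push_neg at hcon
      have : (x (m + 0) : ℝ) + 1 ≤ (kAB α β : ℝ) - 1 := by
        have : x (m + 0) + 1 + 1 ≤ kAB α β := by omega
        have := (Nat.cast_le (α := ℝ)).2 this
        push_cast at this ⊢
        linarith
      linarith
    have : x (m + 0) = kAB α β - 1 := by omega
    simpa using this
  rw [v_const hα0 hβ h1]
  funext m
  exact hxm m

theorem forceB (hα0 : 0 ≤ α) (hβ : 1 < β)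
    (hne : ∀ n, 1 ≤ n → (Thigh α β)^[n] 1 ≠ 1) (x : ℕ → ℕ)
    (hx : ∀ i, x i < kAB α β) (hs1 : phiBInf α β x = 1)
    (hs2 : phiBInf α β (shft x) = α + β - kAB α β + 1) : x = vItin α β := by
  have hb0 : (0:ℝ) < β := by linarith
  have hKc := kAB_cast (α := α) (β := β) hα0 hβ
  have tlt : ∀ m, 1 ≤ m → (Thigh α β)^[m] 1 < 1 := fun m hm =>
    lt_of_le_of_ne (t_le_one m) (hne m hm)
  have key : ∀ m, 1 ≤ m → phiBInf α β (shft^[m] x) = (Thigh α β)^[m] 1 →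
      x m = vItin α β m ∧ phiBInf α β (shft^[m+1] x) = (Thigh α β)^[m+1] 1 := by
    intro m hm hsm
    have hrec := phiBInf_rec (α := α) hb0 (shft^[m] x)
    rw [hsm, show shft (shft^[m] x) = shft^[m+1] x from
      (Function.iterate_succ_apply' shft m x).symm, shft_iter] at hrec
    have heq := phiB_mem_Ioo hb0 hrec.symm (t_pos m) (tlt m hm)
    have hvt := v_add_t hα0 hb0 m
    have hub := phiBInf_le_one (α := α) hb0 (shft^[m+1] x)
    have hlb := phiBInf_nonneg (α := α) hb0 (shft^[m+1] x)
    have ht1 := t_pos (α := α) (β := β) (m+1)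
    have ht2 := tlt (m+1) (by omega)
    have d1 : ((x (m + 0) : ℤ) : ℝ) < ((vItin α β m : ℤ) : ℝ) + 1 := by
      push_cast
      linarith
    have d2 : ((vItin α β m : ℤ) : ℝ) < ((x (m + 0) : ℤ) : ℝ) + 1 := by
      push_cast
      linarith
    have e1 : (x (m + 0) : ℤ) < (vItin α β m : ℤ) + 1 := by exact_mod_cast d1
    have e2 : (vItin α β m : ℤ) < (x (m + 0) : ℤ) + 1 := by exact_mod_cast d2
    have hxv : x (m + 0) = vItin α β m := by omega
    constructor
    · simpa using hxv
    · have : (x (m + 0) : ℝ) = (vItin α β m : ℝ) := by exact_mod_cast hxv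
      linarith
  have base : x 0 = vItin α β 0 ∧ phiBInf α β (shft^[0+1] x) = (Thigh α β)^[0+1] 1 := by
    have hrec := phiBInf_rec (α := α) hb0 x
    rw [hs1] at hrec
    have hle := phiB_eq_one hb0 hrec.symm
    have hub := phiBInf_le_one (α := α) hb0 (shft x)
    have hge : (kAB α β : ℝ) - 1 ≤ (x 0 : ℝ) := by
      rw [hs2] at hle
      linarith
    have hlt := hx 0
    have h2 := kAB_pos (α := α) (β := β) hα0 hβ
    have hx0 : x 0 = kAB α β - 1 := by
      by_contra hcon
      have : x 0 + 1 + 1 ≤ kAB α β := by omega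
      have := (Nat.cast_le (α := ℝ)).2 this
      push_cast at this
      linarith
    constructor
    · rw [hx0, v_zero hα0 hβ]
    · rw [Function.iterate_one, Function.iterate_one, hs2,
        ← Thigh_one_eq hα0 hβ]
  have all : ∀ m, x m = vItin α β m ∧
      phiBInf α β (shft^[m+1] x) = (Thigh α β)^[m+1] 1 := by
    intro m
    induction m with
    | zero => exact base
    | succ m ih => exact key (m+1) (by omega) ih.2
  funext m
  exact (all m).1

theorem not_unique (hα0 : 0 ≤ α) (hβ : 1 < β) (hγ : Thigh α β 1 ≠ 1)
    (n : ℕ) (hn : 1 ≤ n) (ht : (Thigh α β)^[n] 1 = 1) :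
    ∃ y : ℕ → ℕ, y ≠ vItin α β ∧ (∀ i, y i < kAB α β) ∧
      phiBInf α β y = 1 ∧ phiBInf α β (shft y) = α + β - kAB α β + 1 := by
  have hb0 : (0:ℝ) < β := by linarith
  have hKc := kAB_cast (α := α) (β := β) hα0 hβ
  -- n ≥ 2
  have hn2 : 2 ≤ n := by
    rcases Nat.lt_or_ge n 2 with h | h
    · interval_cases n
      · exact absurd (by rwa [Function.iterate_one] at ht) hγ
    · exact h
  set m := n - 1 with hm
  have hm1 : 1 ≤ m := by omega
  have hmn : m + 1 = n := by omega
  have htm1 : (Thigh α β)^[m+1] 1 = 1 := by rw [hmn]; exact ht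
  have tmlt : (Thigh α β)^[m] 1 < 1 := by
    rcases lt_or_eq_of_le (t_le_one (α := α) (β := β) m) with h | h
    · exact h
    · exfalso
      apply hγ
      have := Function.iterate_succ_apply' (Thigh α β) m 1
      rw [htm1, h] at this
      exact this.symm
  have tm0 := t_pos (α := α) (β := β) m
  have hvt := v_add_t hα0 hb0 m
  rw [htm1] at hvt
  -- v m + 1 < kAB
  have hvm1 : vItin α β m + 1 < kAB α β := by
    have hr : ((vItin α β m : ℕ) : ℝ) + 1 < (kAB α β : ℝ) := by
      rw [hKc]
      have h1 : β * (Thigh α β)^[m] 1 + α < β + α := by nlinarith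
      have h2 := Int.le_ceil (α + β)
      linarith
    have : ((vItin α β m + 1 : ℕ) : ℝ) < ((kAB α β : ℕ) : ℝ) := by push_cast; linarith
    exact_mod_cast this
  set y : ℕ → ℕ := fun j => if j < m then vItin α β j else if j = m then vItin α β m + 1 else 0
    with hy
  have hybound : ∀ i, y i < kAB α β := by
    intro i
    rw [hy]
    dsimp only
    split_ifs with h1 h2
    · exact v_lt_k hα0 hβ i
    · exact hvm1
    · have := kAB_pos (α := α) (β := β) hα0 hβ; omega
  have htail : shft^[m+1] y = fun _ => 0 := by
    funext j
    rw [shft_iter, hy]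
    dsimp only
    rw [if_neg (by omega), if_neg (by omega)]
  have hym : y m = vItin α β m + 1 := by
    rw [hy]; dsimp only; rw [if_neg (by omega), if_pos rfl]
  have hsm : phiBInf α β (shft^[m] y) = (Thigh α β)^[m] 1 := by
    have hrec := phiBInf_rec (α := α) hb0 (shft^[m] y)
    rw [show shft (shft^[m] y) = shft^[m+1] y from
      (Function.iterate_succ_apply' shft m y).symm, htail,
      phiBInf_zero_str hα0, shft_iter] at hrec
    rw [hrec]
    have : ((y (m + 0) : ℕ) : ℝ) + 0 = β * (Thigh α β)^[m] 1 + α := by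
      rw [show m + 0 = m from rfl, hym]
      push_cast
      linarith
    rw [this]
    exact phiB_fixed hb0 tm0.le tmlt.le
  have down : ∀ d, d ≤ m → phiBInf α β (shft^[m-d] y) = (Thigh α β)^[m-d] 1 := by
    intro d
    induction d with
    | zero => intro _; simpa using hsm
    | succ d ihd =>
      intro hdm
      have ih' := ihd (by omega)
      have hj1 : (m - (d+1)) + 1 = m - d := by omega
      have hjm : m - (d+1) < m := by omega
      have hrec := phiBInf_rec (α := α) hb0 (shft^[m-(d+1)] y)
      rw [show shft (shft^[m-(d+1)] y) = shft^[(m-(d+1))+1] y from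
        (Function.iterate_succ_apply' shft (m-(d+1)) y).symm, hj1, ih',
        shft_iter] at hrec
      have hyj : y ((m - (d+1)) + 0) = vItin α β (m - (d+1)) := by
        rw [hy]; dsimp only; rw [if_pos (by omega)]
        rfl
      rw [hrec, hyj]
      have hvt' := v_add_t hα0 hb0 (m - (d+1))
      rw [hj1] at hvt'
      rw [show ((vItin α β (m-(d+1)) : ℕ) : ℝ) + (Thigh α β)^[m-d] 1
        = β * (Thigh α β)^[m-(d+1)] 1 + α from hvt']
      exact phiB_fixed hb0 (t_pos _).le (t_le_one _)
  have hs0 : phiBInf α β y = 1 := by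
    have := down m le_rfl
    rw [Nat.sub_self] at this
    simpa using this
  have hs1 : phiBInf α β (shft y) = α + β - kAB α β + 1 := by
    have := down (m-1) (by omega)
    rw [show m - (m-1) = 1 from by omega] at this
    rw [Function.iterate_one, Function.iterate_one] at this
    rw [this, Thigh_one_eq hα0 hβ]
  refine ⟨y, ?_, hybound, hs0, hs1⟩
  intro hcon
  have := congrFun hcon m
  rw [hym] at this
  omega

theorem uniqueness_at_one' (hα0 : 0 ≤ α) (hα1 : α < 1) (hβ : 1 < β) :
    (0 < α + β - kAB α β + 1 ∧ α + β - kAB α β + 1 ≤ 1) ∧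
    (phiBInf α β (vItin α β) = 1 ∧
      phiBInf α β (shft (vItin α β)) = α + β - kAB α β + 1) ∧
    ((∃! v : ℕ → ℕ, (∀ i, v i < kAB α β) ∧
        phiBInf α β v = 1 ∧ phiBInf α β (shft v) = α + β - kAB α β + 1) ↔
      (Thigh α β 1 = 1 ∨ ∀ n, 1 ≤ n → (Thigh α β)^[n] 1 ≠ 1)) ∧
    ((Thigh α β 1 = 1 ∨ ∀ n, 1 ≤ n → (Thigh α β)^[n] 1 ≠ 1) ↔
      ((∀ p, 1 ≤ p → shft^[p] (vItin α β) ≠ vItin α β) ∨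
        vItin α β = fun _ => kAB α β - 1)) := by
  have hb0 : (0:ℝ) < β := by linarith
  have hKc := kAB_cast (α := α) (β := β) hα0 hβ
  have hγeq := Thigh_one_eq (α := α) hα0 hβ
  have hvsol : (∀ i, vItin α β i < kAB α β) ∧ phiBInf α β (vItin α β) = 1 ∧
      phiBInf α β (shft (vItin α β)) = α + β - kAB α β + 1 :=
    ⟨fun i => v_lt_k hα0 hβ i, phiBInf_v_eq_one hα0 hβ,
      by rw [phiBInf_shft_v hα0 hβ]; exact hγeq⟩
  refine ⟨⟨?_, ?_⟩, ⟨hvsol.2.1, hvsol.2.2⟩, ?_, ?_⟩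
  · rw [hKc]
    have := Int.ceil_lt_add_one (α + β)
    linarith
  · rw [hKc]
    have := Int.le_ceil (α + β)
    linarith
  · constructor
    · intro hEU
      by_contra hcon
      push_neg at hcon
      obtain ⟨hγne, n, hn, htn⟩ := hcon
      obtain ⟨y, hyne, hyb, hy1, hy2⟩ := not_unique hα0 hβ hγne n hn htn
      obtain ⟨w, _, huniq⟩ := hEU
      have h1 := huniq (vItin α β) hvsol
      have h2 := huniq y ⟨hyb, hy1, hy2⟩
      exact hyne (h2.trans h1.symm)
    · intro h
      refine ⟨vItin α β, hvsol, ?_⟩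
      rintro y ⟨hyb, hy1, hy2⟩
      rcases h with h | h
      · exact forceA hα0 hβ h y hyb hy1
      · exact forceB hα0 hβ h y hyb hy1 hy2
  · constructor
    · rintro (h | h)
      · exact Or.inr (v_const hα0 hβ h)
      · refine Or.inl (fun p hp hper => h p hp ?_)
        have hh := phiBInf_iter_shft_v hα0 hβ p
        rw [hper, phiBInf_v_eq_one hα0 hβ] at hh
        exact hh.symm
    · rintro (h | h)
      · right
        intro n hn htn
        apply h n hn
        funext j
        rw [shft_iter]
        have hiter : (Thigh α β)^[n + j] 1 = (Thigh α β)^[j] 1 := by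
          rw [Nat.add_comm, Function.iterate_add_apply, htn]
        unfold vItin
        rw [hiter]
      · left
        have hper : shft^[1] (vItin α β) = vItin α β := by
          funext j
          rw [shft_iter, h]
        have hh := phiBInf_iter_shft_v hα0 hβ 1
        rw [hper, phiBInf_v_eq_one hα0 hβ, Function.iterate_one] at hh
        exact hh.symm

end Aux

/-- **Uniqueness criterion at 1.** Let `0 ≤ α < 1 < β`, `k = ⌈α+β⌉`, `γ = α+β−k+1`
(then `γ ∈ (0,1]`). The string `v^{α,β}` always satisfies `φ̄_∞^{α,β}(v^{α,β}) = 1` and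
`φ̄_∞^{α,β}(σ v^{α,β}) = γ`, and the following are equivalent: (1) the equations
`φ̄_∞^{α,β}(v) = 1`, `φ̄_∞^{α,β}(σv) = γ` have exactly one solution `v ∈ A^ℕ`;
(2) either `Ť_{α,β}(1) = 1` or `Ťⁿ_{α,β}(1) ≠ 1` for all `n ≥ 1`;
(3) `v^{α,β}` is not periodic or `v^{α,β} = (k−1)^∞`. -/


theorem uniqueness_at_one (α β : ℝ) (hα0 : 0 ≤ α) (hα1 : α < 1) (hβ : 1 < β) :
    (0 < α + β - kAB α β + 1 ∧ α + β - kAB α β + 1 ≤ 1) ∧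
    (phiBInf α β (vItin α β) = 1 ∧
      phiBInf α β (shft (vItin α β)) = α + β - kAB α β + 1) ∧
    ((∃! v : ℕ → ℕ, (∀ i, v i < kAB α β) ∧
        phiBInf α β v = 1 ∧ phiBInf α β (shft v) = α + β - kAB α β + 1) ↔
      (Thigh α β 1 = 1 ∨ ∀ n, 1 ≤ n → (Thigh α β)^[n] 1 ≠ 1)) ∧
    ((Thigh α β 1 = 1 ∨ ∀ n, 1 ≤ n → (Thigh α β)^[n] 1 ≠ 1) ↔
      ((∀ p, 1 ≤ p → shft^[p] (vItin α β) ≠ vItin α β) ∨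
        vItin α β = fun _ => kAB α β - 1)) := by
  exact uniqueness_at_one' hα0 hα1 hβ
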